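/- arXiv:0808.3840 — 2 statements merged into one kernel-verified Lean document; each statement's English description precedes it below -/
import Mathlib

section
/- Let V be an F_2-vector space and let ξ ∈ I²[V] be nonzero. Then Pf_2(ξ) ≤ |D(ξ)| − 2, and if 0 ∈ D(ξ) then Pf_2(ξ) ≤ |D(ξ)| − 3. -/
/-- The augmentation map ε₀ on the group algebra F₂[V]. -/
noncomputable def eps0 (V : Type*) [AddCommGroup V] [Module (ZMod 2) V] :
    AddMonoidAlgebra (ZMod 2) V →ₐ[ZMod 2] ZMod 2 :=
  AddMonoidAlgebra.lift (ZMod 2) (ZMod 2) V 1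

/-- The augmentation ideal I[V] ⊆ F₂[V]. -/
noncomputable def augIdeal (V : Type*) [AddCommGroup V] [Module (ZMod 2) V] :
    Ideal (AddMonoidAlgebra (ZMod 2) V) :=
  RingHom.ker (eps0 V).toRingHom

/-- The map ε₁ : F₂[V] → V, Σ αᵥ Xᵛ ↦ Σ αᵥ v. -/
noncomputable def eps1 (V : Type*) [AddCommGroup V] [Module (ZMod 2) V] :
    AddMonoidAlgebra (ZMod 2) V →+ V :=
  (Finsupp.liftAddHom fun v => (smulAddHom (ZMod 2) V).flip v).comp
    (AddMonoidAlgebra.coeffAddEquiv (R := ZMod 2) (M := V)).toAddMonoidHom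

/-- 1-fold Pfister elements 1 + Xᵛ. -/
def IsPfister1 {V : Type*} [AddCommGroup V] [Module (ZMod 2) V]
    (x : AddMonoidAlgebra (ZMod 2) V) : Prop :=
  ∃ v : V, x = 1 + AddMonoidAlgebra.single v 1

/-- 2-fold Pfister elements (1 + Xᵘ)(1 + Xᵛ). -/
def IsPfister2 {V : Type*} [AddCommGroup V] [Module (ZMod 2) V]
    (x : AddMonoidAlgebra (ZMod 2) V) : Prop :=
  ∃ u v : V, x = (1 + AddMonoidAlgebra.single u 1) * (1 + AddMonoidAlgebra.single v 1)

/-- m-fold Pfister elements (1 + X^{v₁})⋯(1 + X^{v_m}). -/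
def IsPfister {V : Type*} [AddCommGroup V] [Module (ZMod 2) V] (m : ℕ)
    (x : AddMonoidAlgebra (ZMod 2) V) : Prop :=
  ∃ v : Fin m → V, x = ∏ i, (1 + AddMonoidAlgebra.single (v i) 1)

/-- The m-Pfister number: least number of m-fold Pfister elements summing to x. -/
noncomputable def PfNum {V : Type*} [AddCommGroup V] [Module (ZMod 2) V] (m : ℕ)
    (x : AddMonoidAlgebra (ZMod 2) V) : ℕ :=
  sInf {r | ∃ f : Fin r → AddMonoidAlgebra (ZMod 2) V,
    (∀ i, IsPfister m (f i)) ∧ x = ∑ i, f i}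

section PfAux

variable {V : Type*} [AddCommGroup V] [Module (ZMod 2) V]

lemma pfaux_addself {M : Type*} [AddCommMonoid M] [Module (ZMod 2) M] (x : M) : x + x = 0 := by
  have h : (2 : ZMod 2) • x = x + x := two_smul _ x
  rw [← h, show (2 : ZMod 2) = 0 by decide, zero_smul]

lemma pfaux_add_apply {V : Type*} [AddCommGroup V] [Module (ZMod 2) V]
    (a b : AddMonoidAlgebra (ZMod 2) V) (w : V) : (a + b).coeff w = a.coeff w + b.coeff w := rfl

lemma pfaux_eps0_single (v : V) (c : ZMod 2) : eps0 V (AddMonoidAlgebra.single v c) = c := by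
  simp [eps0, AddMonoidAlgebra.lift_single]

lemma pfaux_eps0_apply (x : AddMonoidAlgebra (ZMod 2) V) : eps0 V x = x.coeff.sum fun _ b => b := by
  rw [eps0, AddMonoidAlgebra.lift_apply]; simp

lemma pfaux_eps1_apply (x : AddMonoidAlgebra (ZMod 2) V) :
    eps1 V x = x.coeff.sum fun a b => b • a := rfl

lemma pfaux_eps1_single (v : V) (c : ZMod 2) : eps1 V (AddMonoidAlgebra.single v c) = c • v := by
  rw [pfaux_eps1_apply]; exact Finsupp.sum_single_index (by simp)

lemma pfaux_eps1_mul (a b : AddMonoidAlgebra (ZMod 2) V) :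
    eps1 V (a * b) = eps0 V a • eps1 V b + eps0 V b • eps1 V a := by
  induction a using AddMonoidAlgebra.induction_linear with
  | zero => simp
  | add f g hf hg =>
      rw [add_mul, map_add, map_add, map_add, hf, hg]
      simp only [add_smul, smul_add]
      abel
  | single u α =>
      induction b using AddMonoidAlgebra.induction_linear with
      | zero => simp
      | add f g hf hg =>
          rw [mul_add, map_add, map_add, map_add, hf, hg]
          simp only [add_smul, smul_add]
          abel
      | single v β =>
          show eps1 V (AddMonoidAlgebra.single u α * AddMonoidAlgebra.single v β)
            = eps0 V (AddMonoidAlgebra.single u α) • eps1 V (AddMonoidAlgebra.single v β)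
              + eps0 V (AddMonoidAlgebra.single v β) • eps1 V (AddMonoidAlgebra.single u α)
          rw [AddMonoidAlgebra.single_mul_single, pfaux_eps1_single, pfaux_eps1_single,
            pfaux_eps1_single, pfaux_eps0_single, pfaux_eps0_single, smul_add,
            smul_smul, smul_smul, mul_comm β α]
          abel

lemma pfaux_mem_aug {x : AddMonoidAlgebra (ZMod 2) V} :
    x ∈ augIdeal V ↔ eps0 V x = 0 := Iff.rfl

lemma pfaux_eps0_of_mem {ξ : AddMonoidAlgebra (ZMod 2) V} (h : ξ ∈ (augIdeal V) ^ 2) :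
    eps0 V ξ = 0 :=
  pfaux_mem_aug.mp (Ideal.pow_le_self (two_ne_zero) h)

lemma pfaux_eps1_of_mem {ξ : AddMonoidAlgebra (ZMod 2) V} (h : ξ ∈ (augIdeal V) ^ 2) :
    eps1 V ξ = 0 := by
  rw [sq] at h
  refine Submodule.mul_induction_on h ?_ ?_
  · intro a ha b hb
    rw [pfaux_eps1_mul, pfaux_mem_aug.mp ha, pfaux_mem_aug.mp hb, zero_smul, zero_smul, add_zero]
  · intro x y hx hy
    rw [map_add, hx, hy, add_zero]

lemma pfaux_coeff_one (x : AddMonoidAlgebra (ZMod 2) V) {w : V} (hw : w ∈ x.coeff.support) :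
    x.coeff w = 1 := by
  have h : ∀ c : ZMod 2, c ≠ 0 → c = 1 := by decide
  exact h _ (Finsupp.mem_support_iff.mp hw)

lemma pfaux_eps0_eq_card (x : AddMonoidAlgebra (ZMod 2) V) :
    eps0 V x = (x.coeff.support.card : ZMod 2) := by
  rw [pfaux_eps0_apply, Finsupp.sum]
  rw [Finset.sum_congr rfl fun w hw => pfaux_coeff_one x hw]
  simp

lemma pfaux_card4 {ξ : AddMonoidAlgebra (ZMod 2) V} (hξ : ξ ≠ 0)
    (hmem : ξ ∈ (augIdeal V) ^ 2) : 4 ≤ ξ.coeff.support.card := by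
  classical
  have h0 : (ξ.coeff.support.card : ZMod 2) = 0 := by
    rw [← pfaux_eps0_eq_card]; exact pfaux_eps0_of_mem hmem
  have hdvd : 2 ∣ ξ.coeff.support.card := (ZMod.natCast_eq_zero_iff _ 2).mp h0
  have hne : ξ.coeff.support.card ≠ 0 := by
    simp only [ne_eq, Finset.card_eq_zero, Finsupp.support_eq_empty, AddMonoidAlgebra.coeff_eq_zero]
    exact hξ
  have hne2 : ξ.coeff.support.card ≠ 2 := by
    intro h2
    obtain ⟨a, b, hab, hs⟩ := Finset.card_eq_two.mp h2
    have ha : a ∈ ξ.coeff.support := by rw [hs]; simp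
    have hb : b ∈ ξ.coeff.support := by rw [hs]; simp
    have he1 : eps1 V ξ = a + b := by
      rw [pfaux_eps1_apply, Finsupp.sum, hs, Finset.sum_pair hab,
        pfaux_coeff_one ξ ha, pfaux_coeff_one ξ hb, one_smul, one_smul]
    rw [pfaux_eps1_of_mem hmem] at he1
    apply hab
    calc a = (a + b) + b := by rw [add_assoc, pfaux_addself, add_zero]
    _ = b := by rw [← he1, zero_add]
  omega

lemma pfaux_expand (u v : V) :
    (1 + AddMonoidAlgebra.single u 1) * (1 + AddMonoidAlgebra.single v 1) =
      (AddMonoidAlgebra.single 0 1 + AddMonoidAlgebra.single u 1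
        + AddMonoidAlgebra.single v 1
        + AddMonoidAlgebra.single (u + v) 1 : AddMonoidAlgebra (ZMod 2) V) := by
  rw [mul_add, add_mul, add_mul, mul_one, one_mul, AddMonoidAlgebra.single_mul_single,
    mul_one, AddMonoidAlgebra.one_def]
  abel

lemma pfaux_pf_mem (u v : V) :
    (1 + AddMonoidAlgebra.single u 1) * (1 + AddMonoidAlgebra.single v 1)
      ∈ (augIdeal V) ^ 2 := by
  rw [sq]
  refine Ideal.mul_mem_mul ?_ ?_
  · rw [pfaux_mem_aug, map_add, map_one, pfaux_eps0_single]; decide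
  · rw [pfaux_mem_aug, map_add, map_one, pfaux_eps0_single]; decide

end PfAux

open scoped Classical in
set_option maxHeartbeats 1000000 in
lemma pfaux_key {V : Type*} [AddCommGroup V] [Module (ZMod 2) V] :
    ∀ n (ξ : AddMonoidAlgebra (ZMod 2) V), ξ ≠ 0 → ξ ∈ (augIdeal V) ^ 2 →
    2 * ξ.coeff.support.card + (if (0 : V) ∈ ξ.coeff.support then 0 else 1) ≤ n →
    ∃ r, r + 2 + (if (0 : V) ∈ ξ.coeff.support then 1 else 0) ≤ ξ.coeff.support.card ∧
      ∃ f : Fin r → AddMonoidAlgebra (ZMod 2) V,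
        (∀ i, IsPfister2 (f i)) ∧ ξ = ∑ i, f i := by
  intro n
  induction n with
  | zero =>
      intro ξ hξ hmem hn
      exfalso
      have h4 := pfaux_card4 hξ hmem
      split_ifs at hn <;> omega
  | succ n ih =>
      intro ξ hξ hmem hn
      classical
      have h4 := pfaux_card4 hξ hmem
      have hnegv : ∀ w : V, -w = w := fun w => neg_eq_of_add_eq_zero_left (pfaux_addself w)
      by_cases h0 : (0 : V) ∈ ξ.coeff.support
      · -- case A : 0 ∈ support
        rw [if_pos h0] at hn
        -- choose u, v
        have hune : (ξ.coeff.support \ {0}).Nonempty := by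
          rw [Finset.nonempty_iff_ne_empty]
          intro h
          have := Finset.card_le_card (Finset.sdiff_eq_empty_iff_subset.mp h)
          simp only [Finset.card_singleton] at this
          omega
        obtain ⟨u, hu'⟩ := hune
        rw [Finset.mem_sdiff, Finset.mem_singleton] at hu'
        obtain ⟨hu, hu0⟩ := hu'
        have hvne : (ξ.coeff.support \ {0, u}).Nonempty := by
          rw [Finset.nonempty_iff_ne_empty]
          intro h
          have h1 := Finset.card_le_card (Finset.sdiff_eq_empty_iff_subset.mp h)
          have h2 : ({0, u} : Finset V).card ≤ 2 :=
            le_trans (Finset.card_insert_le _ _) (by simp)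
          omega
        obtain ⟨v, hv'⟩ := hvne
        rw [Finset.mem_sdiff, Finset.mem_insert, Finset.mem_singleton] at hv'
        push_neg at hv'
        obtain ⟨hv, hv0, hvu⟩ := hv'
        have huv : u ≠ v := fun h => hvu h.symm
        -- basic distinctness of 0, u, v, u+v
        have hs0 : u + v ≠ 0 := by
          intro h
          exact huv (by rw [eq_neg_of_add_eq_zero_left h, hnegv])
        have hsu : u + v ≠ u := by
          intro h
          exact hv0 (by have := h.trans (add_zero u).symm; exact add_left_cancel this)
        have hsv : u + v ≠ v := by
          intro h
          exact hu0 (by have := h.trans (zero_add v).symm; exact add_right_cancel this)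
        set p : AddMonoidAlgebra (ZMod 2) V :=
          (1 + AddMonoidAlgebra.single u 1) * (1 + AddMonoidAlgebra.single v 1) with hpdef
        have hp_apply : ∀ w, p.coeff w = (if 0 = w then 1 else 0) + (if u = w then 1 else 0)
            + (if v = w then 1 else 0) + (if u + v = w then (1 : ZMod 2) else 0) := by
          intro w
          rw [hpdef, pfaux_expand]
          simp [pfaux_add_apply, Finsupp.single_apply]
        set ξ' : AddMonoidAlgebra (ZMod 2) V := ξ + p with hxdef
        have hx_apply : ∀ w, ξ'.coeff w = ξ.coeff w + p.coeff w := fun w => rfl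
        have hx : ξ = ξ' + p := by
          rw [hxdef, add_assoc, pfaux_addself, add_zero]
        -- support bound
        have hsubset : ξ'.coeff.support ⊆ (ξ.coeff.support \ {0, u, v}) ∪ {u + v} := by
          intro w hw
          have hwne : ξ'.coeff w ≠ 0 := Finsupp.mem_support_iff.mp hw
          by_cases hwuv : w = u + v
          · exact Finset.mem_union_right _ (by simp [hwuv])
          · refine Finset.mem_union_left _ ?_
            rw [Finset.mem_sdiff]
            by_cases h1 : w = 0
            · exfalso; apply hwne
              rw [hx_apply, h1, pfaux_coeff_one ξ h0, hp_apply,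
                if_pos rfl, if_neg hu0, if_neg hv0, if_neg hs0]
              decide
            · by_cases h2 : w = u
              · exfalso; apply hwne
                rw [hx_apply, h2, pfaux_coeff_one ξ hu, hp_apply,
                  if_neg (fun h => hu0 h.symm), if_pos rfl, if_neg (fun h => huv h.symm),
                  if_neg hsu]
                decide
              · by_cases h3 : w = v
                · exfalso; apply hwne
                  rw [hx_apply, h3, pfaux_coeff_one ξ hv, hp_apply,
                    if_neg (fun h => hv0 h.symm), if_neg huv, if_pos rfl, if_neg hsv]
                  decide
                · have hpw : p.coeff w = 0 := by
                    rw [hp_apply, if_neg (fun h => h1 h.symm), if_neg (fun h => h2 h.symm),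
                      if_neg (fun h => h3 h.symm), if_neg (fun h => hwuv h.symm)]
                    decide
                  have : ξ.coeff w ≠ 0 := by
                    rw [hx_apply, hpw, add_zero] at hwne; exact hwne
                  constructor
                  · exact Finsupp.mem_support_iff.mpr this
                  · simp [h1, h2, h3]
        have hsub3 : ({0, u, v} : Finset V) ⊆ ξ.coeff.support := by
          intro w hw
          simp only [Finset.mem_insert, Finset.mem_singleton] at hw
          rcases hw with h | h | h <;> subst h <;> assumption
        have hc3 : ({0, u, v} : Finset V).card = 3 := by
          rw [Finset.card_insert_of_notMem (by simp [Ne.symm hu0, Ne.symm hv0]),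
            Finset.card_insert_of_notMem (by simp [huv]), Finset.card_singleton]
        have hcard' : ξ'.coeff.support.card + 2 ≤ ξ.coeff.support.card := by
          have h1 := Finset.card_le_card hsubset
          have h2 := Finset.card_union_le (ξ.coeff.support \ {0, u, v}) ({u + v} : Finset V)
          rw [Finset.card_sdiff_of_subset hsub3, hc3, Finset.card_singleton] at h2
          omega
        -- 0 not in new support
        have h0' : (0 : V) ∉ ξ'.coeff.support := by
          rw [Finsupp.notMem_support_iff, hx_apply, pfaux_coeff_one ξ h0, hp_apply,
            if_pos rfl, if_neg hu0, if_neg hv0, if_neg hs0]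
          decide
        have hppf : IsPfister2 p := ⟨u, v, hpdef⟩
        by_cases hz : ξ' = 0
        · refine ⟨1, by rw [if_pos h0]; omega, fun _ => p, fun _ => hppf, ?_⟩
          rw [hx, hz, zero_add]
          simp
        · have hmem' : ξ' ∈ (augIdeal V) ^ 2 :=
            Ideal.add_mem _ hmem (hpdef ▸ pfaux_pf_mem u v)
          have hmeas : 2 * ξ'.coeff.support.card + (if (0 : V) ∈ ξ'.coeff.support then 0 else 1) ≤ n := by
            rw [if_neg h0']
            omega
          obtain ⟨r, hr, f, hf, hsum⟩ := ih ξ' hz hmem' hmeas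
          rw [if_neg h0'] at hr
          refine ⟨r + 1, by rw [if_pos h0]; omega, Fin.cons p f, ?_, ?_⟩
          · intro i
            refine Fin.cases ?_ ?_ i
            · exact hppf
            · exact fun j => hf j
          · rw [Fin.sum_cons, ← hsum, hx, add_comm]
      · -- case B : 0 ∉ support
        rw [if_neg h0] at hn
        have hune : ξ.coeff.support.Nonempty := by
          rw [← Finset.card_pos]; omega
        obtain ⟨u, hu⟩ := hune
        have hvne : (ξ.coeff.support \ {u}).Nonempty := by
          rw [Finset.nonempty_iff_ne_empty]
          intro h
          have := Finset.card_le_card (Finset.sdiff_eq_empty_iff_subset.mp h)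
          simp only [Finset.card_singleton] at this
          omega
        obtain ⟨v, hv'⟩ := hvne
        rw [Finset.mem_sdiff, Finset.mem_singleton] at hv'
        obtain ⟨hv, hvu⟩ := hv'
        have huv : u ≠ v := fun h => hvu h.symm
        have hu0 : u ≠ 0 := fun h => h0 (h ▸ hu)
        have hv0 : v ≠ 0 := fun h => h0 (h ▸ hv)
        have hs0 : u + v ≠ 0 := by
          intro h
          exact huv (by rw [eq_neg_of_add_eq_zero_left h, hnegv])
        have hsu : u + v ≠ u := by
          intro h
          exact hv0 (by have := h.trans (add_zero u).symm; exact add_left_cancel this)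
        have hsv : u + v ≠ v := by
          intro h
          exact hu0 (by have := h.trans (zero_add v).symm; exact add_right_cancel this)
        set p : AddMonoidAlgebra (ZMod 2) V :=
          (1 + AddMonoidAlgebra.single u 1) * (1 + AddMonoidAlgebra.single v 1) with hpdef
        have hp_apply : ∀ w, p.coeff w = (if 0 = w then 1 else 0) + (if u = w then 1 else 0)
            + (if v = w then 1 else 0) + (if u + v = w then (1 : ZMod 2) else 0) := by
          intro w
          rw [hpdef, pfaux_expand]
          simp [pfaux_add_apply, Finsupp.single_apply]
        set ξ' : AddMonoidAlgebra (ZMod 2) V := ξ + p with hxdef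
        have hx_apply : ∀ w, ξ'.coeff w = ξ.coeff w + p.coeff w := fun w => rfl
        have hx : ξ = ξ' + p := by
          rw [hxdef, add_assoc, pfaux_addself, add_zero]
        have hξ0 : ξ.coeff 0 = 0 := Finsupp.notMem_support_iff.mp h0
        have h0' : (0 : V) ∈ ξ'.coeff.support := by
          rw [Finsupp.mem_support_iff, hx_apply, hξ0, hp_apply,
            if_pos rfl, if_neg hu0, if_neg hv0, if_neg hs0]
          decide
        have hz : ξ' ≠ 0 := fun h => by simp [h] at h0'
        have hsubset : ξ'.coeff.support ⊆ (ξ.coeff.support \ {u, v}) ∪ {0, u + v} := by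
          intro w hw
          have hwne : ξ'.coeff w ≠ 0 := Finsupp.mem_support_iff.mp hw
          by_cases hw0 : w = 0
          · exact Finset.mem_union_right _ (by simp [hw0])
          · by_cases hwuv : w = u + v
            · exact Finset.mem_union_right _ (by simp [hwuv])
            · refine Finset.mem_union_left _ ?_
              rw [Finset.mem_sdiff]
              by_cases h2 : w = u
              · exfalso; apply hwne
                rw [hx_apply, h2, pfaux_coeff_one ξ hu, hp_apply,
                  if_neg (fun h => hu0 h.symm), if_pos rfl, if_neg (fun h => huv h.symm),
                  if_neg hsu]
                decide
              · by_cases h3 : w = v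
                · exfalso; apply hwne
                  rw [hx_apply, h3, pfaux_coeff_one ξ hv, hp_apply,
                    if_neg (fun h => hv0 h.symm), if_neg huv, if_pos rfl, if_neg hsv]
                  decide
                · have hpw : p.coeff w = 0 := by
                    rw [hp_apply, if_neg (fun h => hw0 h.symm), if_neg (fun h => h2 h.symm),
                      if_neg (fun h => h3 h.symm), if_neg (fun h => hwuv h.symm)]
                    decide
                  have : ξ.coeff w ≠ 0 := by
                    rw [hx_apply, hpw, add_zero] at hwne; exact hwne
                  constructor
                  · exact Finsupp.mem_support_iff.mpr this
                  · simp [h2, h3]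
        have hsub2 : ({u, v} : Finset V) ⊆ ξ.coeff.support := by
          intro w hw
          simp only [Finset.mem_insert, Finset.mem_singleton] at hw
          rcases hw with h | h <;> subst h <;> assumption
        have hc2 : ({u, v} : Finset V).card = 2 := by
          rw [Finset.card_insert_of_notMem (by simp [huv]), Finset.card_singleton]
        have hcard' : ξ'.coeff.support.card ≤ ξ.coeff.support.card := by
          have h1 := Finset.card_le_card hsubset
          have h2 := Finset.card_union_le (ξ.coeff.support \ {u, v}) ({0, u + v} : Finset V)
          have h3 : ({0, u + v} : Finset V).card ≤ 2 :=
            le_trans (Finset.card_insert_le _ _) (by simp)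
          rw [Finset.card_sdiff_of_subset hsub2, hc2] at h2
          omega
        have hppf : IsPfister2 p := ⟨u, v, hpdef⟩
        have hmem' : ξ' ∈ (augIdeal V) ^ 2 :=
          Ideal.add_mem _ hmem (hpdef ▸ pfaux_pf_mem u v)
        have hmeas : 2 * ξ'.coeff.support.card + (if (0 : V) ∈ ξ'.coeff.support then 0 else 1) ≤ n := by
          rw [if_pos h0']
          omega
        obtain ⟨r, hr, f, hf, hsum⟩ := ih ξ' hz hmem' hmeas
        rw [if_pos h0'] at hr
        refine ⟨r + 1, by rw [if_neg h0]; omega, Fin.cons p f, ?_, ?_⟩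
        · intro i
          refine Fin.cases ?_ ?_ i
          · exact hppf
          · exact fun j => hf j
        · rw [Fin.sum_cons, ← hsum, hx, add_comm]


/-- For nonzero ξ ∈ I²[V]: Pf₂(ξ) ≤ |D(ξ)| − 2, and Pf₂(ξ) ≤ |D(ξ)| − 3 if 0 ∈ D(ξ);
i.e. ξ admits a decomposition into at most that many 2-fold Pfister elements. -/
theorem pfNum_two_le (V : Type*) [AddCommGroup V] [Module (ZMod 2) V]
    (ξ : AddMonoidAlgebra (ZMod 2) V) (hξ : ξ ≠ 0) (hmem : ξ ∈ (augIdeal V) ^ 2) :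
    (∃ r ≤ ξ.coeff.support.card - 2, ∃ f : Fin r → AddMonoidAlgebra (ZMod 2) V,
      (∀ i, IsPfister2 (f i)) ∧ ξ = ∑ i, f i) ∧
    ((0 : V) ∈ ξ.coeff.support →
      ∃ r ≤ ξ.coeff.support.card - 3, ∃ f : Fin r → AddMonoidAlgebra (ZMod 2) V,
        (∀ i, IsPfister2 (f i)) ∧ ξ = ∑ i, f i) := by
  classical
  have hmeas : 2 * ξ.coeff.support.card + (if (0 : V) ∈ ξ.coeff.support then 0 else 1)
      ≤ 2 * ξ.coeff.support.card + 1 := by split_ifs <;> omega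
  obtain ⟨r, hr, f, hf, hsum⟩ := pfaux_key (2 * ξ.coeff.support.card + 1) ξ hξ hmem hmeas
  have h4 := pfaux_card4 hξ hmem
  constructor
  · refine ⟨r, ?_, f, hf, hsum⟩
    split_ifs at hr <;> omega
  · intro h0
    refine ⟨r, ?_, f, hf, hsum⟩
    rw [if_pos h0] at hr
    omega
end

section
/- Let k be a field of characteristic ≠ 2 containing a square root of −1, let n ≥ 2 be even, let K = k(x_1, …, x_n), set x_0 = x_1⋯x_n, and let q'_0 = ⟨1, x_0, x_1, …, x_n⟩. Then q'_0 ∈ I²(K) and Pf_2(q'_0) = n − 1. -/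
set_option linter.unusedSectionVars false


/-- The image of the one-dimensional form `⟨a⟩` in the integral group ring `ℤ[kˣ]`. -/
noncomputable def genElt (k : Type*) [Field k] (a : kˣ) : MonoidAlgebra ℤ kˣ :=
  MonoidAlgebra.of ℤ kˣ a

/-- The ideal of Witt relations in `ℤ[kˣ]`: the square-class relations `⟨u²⟩ = ⟨1⟩`,
the hyperbolic relation `⟨1⟩ + ⟨-1⟩ = 0`, and the chain relations
`⟨a⟩ + ⟨b⟩ = ⟨c⟩ + ⟨abc⟩` whenever `a + b = c ≠ 0` in `k`.  By Witt's presentation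
theorem, the quotient of `ℤ[kˣ]` by this ideal is the Witt ring `W(k)`. -/
noncomputable def wittRel (k : Type*) [Field k] : Ideal (MonoidAlgebra ℤ kˣ) :=
  Ideal.span (insert (genElt k 1 + genElt k (-1))
    ({x | ∃ u : kˣ, x = genElt k (u ^ 2) - genElt k 1} ∪
     {x | ∃ a b c : kˣ, (a : k) + (b : k) = (c : k) ∧
        x = genElt k a + genElt k b - genElt k c - genElt k (a * b * c)}))

/-- The Witt ring `W(k)`, via Witt's presentation. -/
abbrev WittRing (k : Type*) [Field k] := MonoidAlgebra ℤ kˣ ⧸ wittRel k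

/-- The Witt class of the one-dimensional form `⟨a⟩`. -/
noncomputable def wcls (k : Type*) [Field k] (a : kˣ) : WittRing k :=
  Ideal.Quotient.mk (wittRel k) (genElt k a)

/-- The Witt class of the diagonal quadratic form `⟨q 0, …, q (n-1)⟩`. -/
noncomputable def wclassOf (k : Type*) [Field k] {n : ℕ} (q : Fin n → kˣ) : WittRing k :=
  ∑ i, wcls k (q i)

/-- The fundamental ideal `I(k)`, generated by the classes of even-dimensional forms. -/
noncomputable def fundIdeal (k : Type*) [Field k] : Ideal (WittRing k) :=
  Ideal.span {x | ∃ a b : kˣ, x = wcls k a + wcls k b}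

/-- The diagonal form `⟨q 0, …, q (n-1)⟩` represents `1`. -/
def RepresentsOne (k : Type*) [Field k] {n : ℕ} (q : Fin n → kˣ) : Prop :=
  ∃ c : Fin n → k, ∑ i, (q i : k) * c i ^ 2 = 1

/-- The diagonal form `⟨q 0, …, q (n-1)⟩` is anisotropic. -/
def Anisotropic (k : Type*) [Field k] {n : ℕ} (q : Fin n → kˣ) : Prop :=
  ∀ c : Fin n → k, ∑ i, (q i : k) * c i ^ 2 = 0 → c = 0

/-- Witt classes of 1-fold Pfister forms `⟨1, a⟩`. -/
def IsPfister1W (k : Type*) [Field k] (x : WittRing k) : Prop :=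
  ∃ a : kˣ, x = wcls k 1 + wcls k a

/-- Witt classes of 2-fold Pfister forms `⟨⟨a, b⟩⟩ = ⟨1,a⟩ ⊗ ⟨1,b⟩`. -/
def IsPfister2W (k : Type*) [Field k] (x : WittRing k) : Prop :=
  ∃ a b : kˣ, x = (wcls k 1 + wcls k a) * (wcls k 1 + wcls k b)

/-- `x` is a sum of `r` Witt classes of 1-fold Pfister forms. -/
def Pf1In (k : Type*) [Field k] (x : WittRing k) (r : ℕ) : Prop :=
  ∃ f : Fin r → WittRing k, (∀ i, IsPfister1W k (f i)) ∧ x = ∑ i, f i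

/-- `x` is a sum of `r` Witt classes of 2-fold Pfister forms. -/
def Pf2In (k : Type*) [Field k] (x : WittRing k) (r : ℕ) : Prop :=
  ∃ f : Fin r → WittRing k, (∀ i, IsPfister2W k (f i)) ∧ x = ∑ i, f i

/-- The 1-Pfister number of a Witt class: the least number of 1-fold Pfister forms
whose sum is the given class. -/
noncomputable def Pf1Num (k : Type*) [Field k] (x : WittRing k) : ℕ :=
  sInf {r | Pf1In k x r}

/-- The 2-Pfister number of a Witt class: the least number of 2-fold Pfister forms
whose sum is the given class. -/
noncomputable def Pf2Num (k : Type*) [Field k] (x : WittRing k) : ℕ :=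
  sInf {r | Pf2In k x r}

/-- `k` contains a square root of `-1`. -/
def HasSqrtNegOne (k : Type*) [Field k] : Prop := ∃ i : k, i * i = -1

namespace PfAux

abbrev Gr (ι : Type) := ι → ZMod 2
abbrev Alg (ι : Type) : Type := MonoidAlgebra (ZMod 2) (Multiplicative (Gr ι))

noncomputable def sg {ι : Type} (γ : Gr ι) : Alg ι :=
  MonoidAlgebra.single (Multiplicative.ofAdd γ) 1

lemma sg_zero {ι : Type} : sg (0 : Gr ι) = 1 := rfl

lemma sg_mul {ι : Type} (γ δ : Gr ι) : sg γ * sg δ = sg (γ + δ) := by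
  simp only [sg, MonoidAlgebra.single_mul_single, mul_one]
  rfl

lemma two_zmod2 (x : ZMod 2) : x + x = 0 := CharTwo.add_self_eq_zero x

lemma sg_add_self {ι : Type} (γ : Gr ι) : sg γ + sg γ = 0 := by
  rw [sg, ← MonoidAlgebra.single_add]
  rw [show (1 : ZMod 2) + 1 = 0 by decide, MonoidAlgebra.single_zero]

lemma one_add_one_alg {ι : Type} : (1 : Alg ι) + 1 = 0 := by
  rw [← sg_zero, sg_add_self]

lemma Pexpand {ι : Type} (γ δ : Gr ι) :
    (1 + sg γ) * (1 + sg δ) = 1 + sg γ + sg δ + sg (γ + δ) := by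
  rw [add_mul, one_mul, mul_one_add, sg_mul]
  ring

lemma Pdegen {ι : Type} (γ δ : Gr ι) (h : γ = 0 ∨ δ = 0 ∨ γ = δ) :
    (1 + sg γ) * (1 + sg δ) = 0 := by
  rcases h with h | h | h
  · rw [h, sg_zero, one_add_one_alg, zero_mul]
  · rw [h, sg_zero, one_add_one_alg, mul_zero]
  · subst h
    rw [Pexpand]
    have : γ + γ = 0 := by funext i; exact two_zmod2 _
    rw [this, sg_zero]
    have h1 : (1 : Alg ι) + sg γ + sg γ = 1 := by
      rw [add_assoc, sg_add_self, add_zero]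
    rw [h1, one_add_one_alg]

open Classical in
lemma coeff_sg {ι : Type} (γ δ : Gr ι) :
    (sg γ : Alg ι).coeff (Multiplicative.ofAdd δ) = if γ = δ then 1 else 0 := by
  rw [sg, MonoidAlgebra.coeff_single, Finsupp.single_apply]
  by_cases h : γ = δ
  · subst h; simp
  · rw [if_neg h, if_neg (fun he => h (by exact_mod_cast he))]

noncomputable def Xel (ι : Type) [Fintype ι] [DecidableEq ι] : Alg ι :=
  1 + sg (fun _ => 1) + ∑ i : ι, sg (Pi.single i 1)

end PfAux

namespace PfAux

section Coeffs

variable {ι : Type} [Fintype ι] [DecidableEq ι]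

noncomputable def coeffAt (δ : Gr ι) : Alg ι →+ ZMod 2 :=
  (Finsupp.applyAddHom (Multiplicative.ofAdd δ)).comp MonoidAlgebra.coeffAddEquiv.toAddMonoidHom

lemma coeffAt_sg (γ δ : Gr ι) : coeffAt δ (sg γ) = if γ = δ then 1 else 0 := by
  have h := coeff_sg γ δ
  rw [show (coeffAt δ) (sg γ) = (sg γ).coeff (Multiplicative.ofAdd δ) from rfl, h]
  congr 1

lemma coeffAt_one (δ : Gr ι) : coeffAt δ (1 : Alg ι) = if (0 : Gr ι) = δ then 1 else 0 := by
  rw [← sg_zero, coeffAt_sg]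

lemma ones_ne_zero (h : 1 ≤ Fintype.card ι) : (fun _ => (1 : ZMod 2)) ≠ (0 : Gr ι) := by
  have : Nonempty ι := Fintype.card_pos_iff.mp h
  obtain ⟨i⟩ := this
  intro hc
  have := congrFun hc i
  simp at this

lemma single_ne_zero' (i : ι) : (Pi.single i 1 : Gr ι) ≠ 0 := by
  intro hc
  have := congrFun hc i
  simp at this

lemma single_ne_ones (h : 2 ≤ Fintype.card ι) (i : ι) :
    (Pi.single i 1 : Gr ι) ≠ (fun _ => 1) := by
  obtain ⟨j, hj⟩ := Fintype.exists_ne_of_one_lt_card (by omega) i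
  intro hc
  have := congrFun hc j
  rw [Pi.single_apply, if_neg hj] at this
  simp at this

lemma coeff_Xel_zero (h : 1 ≤ Fintype.card ι) : coeffAt (0 : Gr ι) (Xel ι) = 1 := by
  rw [Xel, map_add, map_add, map_sum, coeffAt_one, if_pos rfl, coeffAt_sg,
    if_neg (ones_ne_zero h)]
  have : ∀ i : ι, coeffAt (0 : Gr ι) (sg (Pi.single i 1)) = 0 := fun i => by
    rw [coeffAt_sg, if_neg (single_ne_zero' i)]
  rw [Finset.sum_congr rfl (fun i _ => this i), Finset.sum_const, smul_zero]
  norm_num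

lemma coeff_Xel_ones (h : 2 ≤ Fintype.card ι) : coeffAt (fun _ => 1 : Gr ι) (Xel ι) = 1 := by
  rw [Xel, map_add, map_add, map_sum, coeffAt_one,
    if_neg (fun hc => (ones_ne_zero (by omega) hc.symm)), coeffAt_sg, if_pos rfl]
  have : ∀ i : ι, coeffAt (fun _ => 1 : Gr ι) (sg (Pi.single i 1)) = 0 := fun i => by
    rw [coeffAt_sg, if_neg (single_ne_ones h i)]
  rw [Finset.sum_congr rfl (fun i _ => this i), Finset.sum_const, smul_zero]
  norm_num

lemma coeffAt_P (γ δ : Gr ι) (hγ : γ ≠ 0) (hδ : δ ≠ 0) (hne : γ ≠ δ) :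
    coeffAt (0 : Gr ι) ((1 + sg γ) * (1 + sg δ)) = 1 := by
  rw [Pexpand, map_add, map_add, map_add, coeffAt_one, if_pos rfl,
    coeffAt_sg, if_neg hγ, coeffAt_sg, if_neg hδ, coeffAt_sg, if_neg ?_]
  · norm_num
  · intro hc
    apply hne
    funext i
    have := congrFun hc i
    have h2 := two_zmod2 (δ i)
    simp only [Pi.add_apply, Pi.zero_apply] at this
    -- γ i + δ i = 0 → γ i = δ i
    have : γ i + (δ i + δ i) = 0 + δ i := by rw [← add_assoc, this]
    rwa [h2, add_zero, zero_add] at this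

lemma odd_card_of_cast_one (m : ℕ) (h : (m : ZMod 2) = 1) : m % 2 = 1 := by
  rcases Nat.mod_two_eq_zero_or_one m with h0 | h1
  · exfalso
    obtain ⟨t, ht⟩ := (Nat.even_iff.mpr h0)
    subst ht
    push_cast at h
    rw [two_zmod2] at h
    exact one_ne_zero h.symm
  · exact h1

end Coeffs

end PfAux

namespace PfAux

section Step

variable {ι : Type} [Fintype ι] [DecidableEq ι] (u : Gr ι) (p q : ι)

/-- The linear reduction map that merges out the coordinates `p` and `q`. -/
def Lfun (v : Gr ι) : Gr {i : ι // i ≠ p ∧ i ≠ q} :=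
  fun i' => v i'.1 + (v p + v q) * u i'.1

lemma Lfun_add (v w : Gr ι) : Lfun u p q (v + w) = Lfun u p q v + Lfun u p q w := by
  funext i'
  simp only [Lfun, Pi.add_apply]
  ring

lemma Lfun_zero : Lfun u p q 0 = 0 := by
  funext i'; simp [Lfun]

lemma Lfun_u (hp : u p = 1) (hq : u q = 0) : Lfun u p q u = 0 := by
  funext i'
  simp only [Lfun, hp, hq, add_zero, one_mul, Pi.zero_apply]
  exact two_zmod2 _

lemma Lfun_ones : Lfun u p q (fun _ => 1) = (fun _ => 1) := by
  funext i'
  simp only [Lfun]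
  rw [two_zmod2, zero_mul, add_zero]

lemma Lfun_single (i : ι) (hip : i ≠ p) (hiq : i ≠ q) :
    Lfun u p q (Pi.single i 1) = Pi.single (⟨i, hip, hiq⟩ : {i : ι // i ≠ p ∧ i ≠ q}) 1 := by
  funext i'
  simp only [Lfun, Pi.single_apply, if_neg (Ne.symm hip), if_neg (Ne.symm hiq),
    add_zero, zero_mul]
  by_cases h : i'.1 = i
  · rw [if_pos h, if_pos (Subtype.ext h)]
  · rw [if_neg h, if_neg (fun hh => h (by rw [hh]))]

lemma Lfun_single_p (hq : p ≠ q) :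
    Lfun u p q (Pi.single p 1) = (fun i' => u i'.1) := by
  funext i'
  simp only [Lfun, Pi.single_apply, if_pos rfl, if_neg (show ¬ (i'.1 = p) from i'.2.1),
    if_neg (Ne.symm hq), if_pos trivial]
  ring

lemma Lfun_single_q (hq : p ≠ q) :
    Lfun u p q (Pi.single q 1) = (fun i' => u i'.1) := by
  funext i'
  simp only [Lfun, Pi.single_apply, if_pos rfl, if_neg (show ¬ (i'.1 = q) from i'.2.2),
    if_neg hq, if_pos trivial]
  ring

/-- `Lfun` as a monoid hom on the multiplicative groups. -/
def Lhom : Multiplicative (Gr ι) →* Multiplicative (Gr {i : ι // i ≠ p ∧ i ≠ q}) where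
  toFun h := Multiplicative.ofAdd (Lfun u p q (Multiplicative.toAdd h))
  map_one' := by
    simp only [toAdd_one, Lfun_zero, ofAdd_zero]
  map_mul' v w := by
    simp only [toAdd_mul, Lfun_add, ofAdd_add]

noncomputable def Amap : Alg ι →+* Alg {i : ι // i ≠ p ∧ i ≠ q} :=
  MonoidAlgebra.mapDomainRingHom (ZMod 2) (Lhom u p q)

lemma Amap_sg (γ : Gr ι) : Amap u p q (sg γ) = sg (Lfun u p q γ) := by
  rw [Amap, sg, sg]
  exact MonoidAlgebra.mapDomain_single

end Step

end PfAux

namespace PfAux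

section Step2

variable {ι : Type} [Fintype ι] [DecidableEq ι] (u : Gr ι) (p q : ι)

lemma card_subtype_ne_two (hpq : p ≠ q) :
    Fintype.card {i : ι // i ≠ p ∧ i ≠ q} = Fintype.card ι - 2 := by
  classical
  rw [Fintype.card_subtype]
  have h1 : Finset.univ.filter (fun i : ι => i ≠ p ∧ i ≠ q)
      = (Finset.univ.erase p).erase q := by
    ext i
    simp only [Finset.mem_filter, Finset.mem_univ, true_and, Finset.mem_erase]
    tauto
  rw [h1, Finset.card_erase_of_mem, Finset.card_erase_of_mem (Finset.mem_univ p)]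
  · rw [← Fintype.card, Nat.sub_sub]
  · exact Finset.mem_erase.mpr ⟨Ne.symm hpq, Finset.mem_univ q⟩

lemma Amap_Xel (hp : u p = 1) (hq : u q = 0) (hpq : p ≠ q) :
    Amap u p q (Xel ι) = Xel {i : ι // i ≠ p ∧ i ≠ q} := by
  rw [Xel, map_add, map_add, map_sum, map_one, Amap_sg, Lfun_ones, Xel]
  congr 1
  have hsum : ∀ i : ι, Amap u p q (sg (Pi.single i 1)) = sg (Lfun u p q (Pi.single i 1)) :=
    fun i => Amap_sg u p q _
  rw [Finset.sum_congr rfl (fun i _ => hsum i)]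
  rw [← Finset.add_sum_erase _ _ (Finset.mem_univ p),
    ← Finset.add_sum_erase _ _ (Finset.mem_erase.mpr ⟨Ne.symm hpq, Finset.mem_univ q⟩)]
  rw [Lfun_single_p u p q hpq, Lfun_single_q u p q hpq, ← add_assoc, sg_add_self, zero_add]
  refine Finset.sum_bij' (fun i hi => (⟨i, ?_, ?_⟩ : {i : ι // i ≠ p ∧ i ≠ q}))
    (fun i' _ => i'.1) ?_ ?_ ?_ ?_ ?_
  · exact (Finset.mem_erase.mp (Finset.mem_erase.mp hi).2).1
  · exact (Finset.mem_erase.mp hi).1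
  · intro a ha; exact Finset.mem_univ _
  · intro a ha
    exact Finset.mem_erase.mpr ⟨a.2.2, Finset.mem_erase.mpr ⟨a.2.1, Finset.mem_univ _⟩⟩
  · intro a ha; rfl
  · intro a ha; rfl
  · intro i hi
    rw [Lfun_single u p q i (Finset.mem_erase.mp (Finset.mem_erase.mp hi).2).1
      (Finset.mem_erase.mp hi).1]

end Step2

/-- The core combinatorial lemma: a representation of the element
`1 + x^(1,…,1) + ∑ i x^{e_i}` of `F₂[F₂^ι]` as a sum of products
`(1+x^γ)(1+x^δ)` with all factors nontrivial requires at least `card ι − 1` terms. -/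
theorem core : ∀ (n : ℕ) (ι : Type) (_ : DecidableEq ι) (_ : Fintype ι),
    Fintype.card ι = n → Even n →
    ∀ (r : ℕ) (γ δ : Fin r → Gr ι) (s : Finset (Fin r)),
      (∀ j ∈ s, γ j ≠ 0 ∧ δ j ≠ 0 ∧ γ j ≠ δ j) →
      Xel ι = ∑ j ∈ s, (1 + sg (γ j)) * (1 + sg (δ j)) →
      n ≤ s.card + 1 := by
  intro n
  induction n using Nat.strong_induction_on with
  | _ n IH =>
  intro ι _ _ hcard heven r γ δ s hnd hrep
  rcases Nat.eq_zero_or_pos n with h0 | hpos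
  · omega
  have hn2 : 2 ≤ n := by
    obtain ⟨t, ht⟩ := heven; omega
  -- parity of s.card
  have hcast : ((s.card : ZMod 2)) = 1 := by
    have h1 : coeffAt (0 : Gr ι) (Xel ι) = 1 := coeff_Xel_zero (by omega)
    rw [hrep, map_sum] at h1
    rw [Finset.sum_congr rfl (fun j hj => coeffAt_P (γ j) (δ j)
      (hnd j hj).1 (hnd j hj).2.1 (hnd j hj).2.2)] at h1
    rw [Finset.sum_const, nsmul_eq_mul, mul_one] at h1
    exact h1
  have hodd : s.card % 2 = 1 := odd_card_of_cast_one _ hcast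
  -- s is nonempty
  have hsne : s.Nonempty := by
    rcases Finset.eq_empty_or_nonempty s with h | h
    · exfalso
      subst h
      rw [Finset.sum_empty] at hrep
      have h1 : coeffAt (fun _ => 1 : Gr ι) (Xel ι) = 1 := coeff_Xel_ones (by omega)
      rw [hrep, map_zero] at h1
      exact one_ne_zero h1.symm
    · exact h
  obtain ⟨j₀, hj₀⟩ := hsne
  obtain ⟨hg0, hd0, hgd⟩ := hnd j₀ hj₀
  -- choose the vector u to kill
  obtain ⟨u, hu0, hu1, huj⟩ : ∃ u : Gr ι, u ≠ 0 ∧ u ≠ (fun _ => 1) ∧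
      (u = γ j₀ ∨ u = δ j₀) := by
    by_cases hcase : γ j₀ = (fun _ => 1)
    · refine ⟨δ j₀, hd0, ?_, Or.inr rfl⟩
      intro hc; exact hgd (hcase.trans hc.symm)
    · exact ⟨γ j₀, hg0, hcase, Or.inl rfl⟩
  have hzm : ∀ x : ZMod 2, x ≠ 0 → x = 1 := by decide
  have hzm' : ∀ x : ZMod 2, x ≠ 1 → x = 0 := by decide
  obtain ⟨p, hp⟩ : ∃ p, u p = 1 := by
    obtain ⟨p, hp⟩ := Function.ne_iff.mp hu0
    exact ⟨p, hzm _ hp⟩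
  obtain ⟨q, hq⟩ : ∃ q, u q = 0 := by
    obtain ⟨q, hq⟩ := Function.ne_iff.mp hu1
    exact ⟨q, hzm' _ hq⟩
  have hpq : p ≠ q := by
    intro h; rw [h, hq] at hp; exact one_ne_zero hp.symm
  -- the reduced equation
  have heq2 : Xel {i : ι // i ≠ p ∧ i ≠ q}
      = ∑ j ∈ s, (1 + sg (Lfun u p q (γ j))) * (1 + sg (Lfun u p q (δ j))) := by
    rw [← Amap_Xel u p q hp hq hpq, hrep, map_sum]
    refine Finset.sum_congr rfl (fun j _ => ?_)
    rw [map_mul, map_add, map_add, map_one, Amap_sg, Amap_sg]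
  classical
  set s' := s.filter (fun j => Lfun u p q (γ j) ≠ 0 ∧ Lfun u p q (δ j) ≠ 0 ∧
    Lfun u p q (γ j) ≠ Lfun u p q (δ j)) with hs'
  have heq3 : Xel {i : ι // i ≠ p ∧ i ≠ q}
      = ∑ j ∈ s', (1 + sg (Lfun u p q (γ j))) * (1 + sg (Lfun u p q (δ j))) := by
    rw [heq2]
    symm
    apply Finset.sum_filter_of_ne
    intro j _ hne
    by_contra hc
    push_neg at hc
    apply hne
    by_cases h1 : Lfun u p q (γ j) = 0
    · exact Pdegen _ _ (Or.inl h1)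
    by_cases h2 : Lfun u p q (δ j) = 0
    · exact Pdegen _ _ (Or.inr (Or.inl h2))
    · exact Pdegen _ _ (Or.inr (Or.inr (hc h1 h2)))
  have hcard' : Fintype.card {i : ι // i ≠ p ∧ i ≠ q} = n - 2 := by
    rw [card_subtype_ne_two p q hpq, hcard]
  have heven' : Even (n - 2) := by
    obtain ⟨t, ht⟩ := heven; exact ⟨t - 1, by omega⟩
  have hIH := IH (n - 2) (by omega) {i : ι // i ≠ p ∧ i ≠ q} inferInstance inferInstance
    hcard' heven' r (fun j => Lfun u p q (γ j)) (fun j => Lfun u p q (δ j)) s'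
    (fun j hj => (Finset.mem_filter.mp hj).2) heq3
  -- j₀ is not in s'
  have hj₀' : j₀ ∉ s' := by
    intro hc
    obtain ⟨-, h1, h2, -⟩ := Finset.mem_filter.mp hc
    have hLu : Lfun u p q u = 0 := Lfun_u u p q hp hq
    rcases huj with h | h
    · rw [← h] at h1; exact h1 hLu
    · rw [← h] at h2; exact h2 hLu
  have hsub : s' ⊆ s.erase j₀ := by
    intro j hj
    refine Finset.mem_erase.mpr ⟨?_, (Finset.mem_filter.mp hj).1⟩
    intro hc; rw [hc] at hj; exact hj₀' hj
  have hcount : s'.card ≤ s.card - 1 := by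
    have := Finset.card_le_card hsub
    rwa [Finset.card_erase_of_mem hj₀] at this
  have hs1 : 1 ≤ s.card := Finset.card_pos.mpr ⟨j₀, hj₀⟩
  obtain ⟨t, ht⟩ := heven
  omega

/-- Main combinatorial bound, allowing degenerate products. -/
theorem main_comb (ι : Type) [Fintype ι] [DecidableEq ι] (heven : Even (Fintype.card ι))
    (r : ℕ) (γ δ : Fin r → Gr ι)
    (hrep : Xel ι = ∑ j, (1 + sg (γ j)) * (1 + sg (δ j))) :
    Fintype.card ι ≤ r + 1 := by
  classical
  set s := Finset.univ.filter (fun j : Fin r => γ j ≠ 0 ∧ δ j ≠ 0 ∧ γ j ≠ δ j) with hs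
  have hrep' : Xel ι = ∑ j ∈ s, (1 + sg (γ j)) * (1 + sg (δ j)) := by
    rw [hrep]
    symm
    apply Finset.sum_filter_of_ne
    intro j _ hne
    by_contra hc
    push_neg at hc
    apply hne
    by_cases h1 : γ j = 0
    · exact Pdegen _ _ (Or.inl h1)
    by_cases h2 : δ j = 0
    · exact Pdegen _ _ (Or.inr (Or.inl h2))
    · exact Pdegen _ _ (Or.inr (Or.inr (hc h1 h2)))
  have := core (Fintype.card ι) ι inferInstance inferInstance rfl heven r γ δ s
    (fun j hj => (Finset.mem_filter.mp hj).2) hrep'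
  have hle : s.card ≤ r := by
    have := Finset.card_filter_le Finset.univ
      (fun j : Fin r => γ j ≠ 0 ∧ δ j ≠ 0 ∧ γ j ≠ δ j)
    simpa using this
  omega

end PfAux


namespace PfAux

section Val

variable {n : ℕ} {k : Type*} [Field k]

/-- Lex-leading exponent of a multivariate polynomial. -/
noncomputable def vdeg (p : MvPolynomial (Fin n) k) : Lex (Fin n →₀ ℕ) :=
  AddMonoidAlgebra.supDegree toLex p

lemma toLex_hadd : ∀ (a b : Fin n →₀ ℕ), toLex (a + b) = toLex a + toLex b :=
  fun _ _ => rfl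

lemma vdeg_mul {p q : MvPolynomial (Fin n) k} (hp : p ≠ 0) (hq : q ≠ 0) :
    vdeg (p * q) = vdeg p + vdeg q := by
  apply AddMonoidAlgebra.supDegree_mul toLex.injective toLex_hadd ?_ hp hq
  exact mul_ne_zero ((AddMonoidAlgebra.leadingCoeff_ne_zero toLex.injective).mpr hp)
    ((AddMonoidAlgebra.leadingCoeff_ne_zero toLex.injective).mpr hq)

lemma vdeg_add_cases {p q : MvPolynomial (Fin n) k} (hne : vdeg p ≠ vdeg q) :
    vdeg (p + q) = vdeg p ∨ vdeg (p + q) = vdeg q := by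
  rcases lt_or_gt_of_ne hne with h | h
  · exact Or.inr (AddMonoidAlgebra.supDegree_add_eq_right h)
  · exact Or.inl (AddMonoidAlgebra.supDegree_add_eq_left h)

lemma vdeg_X (i : Fin n) :
    vdeg (MvPolynomial.X i : MvPolynomial (Fin n) k) = toLex (Finsupp.single i 1) := by
  rw [vdeg, MvPolynomial.X, ← MvPolynomial.single_eq_monomial]
  exact AddMonoidAlgebra.supDegree_single_ne_zero _ one_ne_zero

lemma vdeg_C {c : k} (hc : c ≠ 0) :
    vdeg (MvPolynomial.C c : MvPolynomial (Fin n) k) = 0 := by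
  rw [vdeg, MvPolynomial.C_apply, ← MvPolynomial.single_eq_monomial]
  exact AddMonoidAlgebra.supDegree_single_ne_zero _ hc

lemma vdeg_one : vdeg (1 : MvPolynomial (Fin n) k) = 0 := by
  rw [← MvPolynomial.C_1]; exact vdeg_C one_ne_zero

/-- Reduction of a lex exponent mod 2. -/
def m2 (d : Lex (Fin n →₀ ℕ)) : Fin n → ZMod 2 := fun i => ((ofLex d) i : ZMod 2)

lemma m2_add (c d : Lex (Fin n →₀ ℕ)) : m2 (c + d) = m2 c + m2 d := by
  funext i
  simp only [m2, Pi.add_apply]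
  rw [show ofLex (c + d) = ofLex c + ofLex d from rfl, Finsupp.add_apply, Nat.cast_add]

lemma m2_zero : m2 (0 : Lex (Fin n →₀ ℕ)) = 0 := by
  funext i; simp [m2]

end Val

end PfAux

namespace PfAux

section Wdeg

variable {n : ℕ} {k : Type*} [Field k]

local notation "Rp" => MvPolynomial (Fin n) k
local notation "K" => FractionRing (MvPolynomial (Fin n) k)

/-- Mod-2 lex-valuation on the rational function field. -/
noncomputable def wdeg (z : K) : Fin n → ZMod 2 :=
  m2 (vdeg ((IsLocalization.sec (nonZeroDivisors Rp) z).1 : Rp))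
    - m2 (vdeg (((IsLocalization.sec (nonZeroDivisors Rp) z).2 : Rp)))

lemma algebraMap_ne_zero {f : Rp} (hf : f ≠ 0) :
    algebraMap Rp K f ≠ 0 := by
  intro hc
  exact hf (IsFractionRing.injective Rp K (by rw [hc, map_zero]))

lemma wdeg_spec (z : K) (f g : Rp) (hf : f ≠ 0) (hg : g ≠ 0)
    (h : algebraMap Rp K f = z * algebraMap Rp K g) :
    wdeg z = m2 (vdeg f) - m2 (vdeg g) := by
  set a : Rp := (IsLocalization.sec (nonZeroDivisors Rp) z).1 with ha
  set b := (IsLocalization.sec (nonZeroDivisors Rp) z).2 with hb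
  have hbz : (b : Rp) ≠ 0 := nonZeroDivisors.coe_ne_zero b
  have hsec : z * algebraMap Rp K (b : Rp) = algebraMap Rp K a :=
    IsLocalization.sec_spec (nonZeroDivisors Rp) z
  have hzne : z ≠ 0 := by
    intro hc
    rw [hc, zero_mul] at h
    exact algebraMap_ne_zero hf h
  have haz : a ≠ 0 := by
    intro hc
    rw [hc, map_zero] at hsec
    exact hzne (by
      have := mul_eq_zero.mp hsec
      rcases this with h1 | h1
      · exact h1
      · exact absurd h1 (algebraMap_ne_zero hbz))
  have key : f * (b : Rp) = a * g := by
    apply IsFractionRing.injective Rp K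
    rw [map_mul, map_mul, h, ← hsec]
    ring
  have hv : vdeg f + vdeg (b : Rp) = vdeg a + vdeg g := by
    rw [← vdeg_mul hf hbz, ← vdeg_mul haz hg, key]
  have hm : m2 (vdeg f) + m2 (vdeg (b : Rp)) = m2 (vdeg a) + m2 (vdeg g) := by
    rw [← m2_add, ← m2_add, hv]
  rw [wdeg, ← ha, ← hb]
  rw [sub_eq_sub_iff_add_eq_add, hm, add_comm]

lemma exists_rep (u : (K)ˣ) : ∃ f g : Rp, f ≠ 0 ∧ g ≠ 0 ∧
    algebraMap Rp K f = (u : K) * algebraMap Rp K g := by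
  set a : Rp := (IsLocalization.sec (nonZeroDivisors Rp) (u : K)).1 with ha
  set b := (IsLocalization.sec (nonZeroDivisors Rp) (u : K)).2 with hb
  have hbz : (b : Rp) ≠ 0 := nonZeroDivisors.coe_ne_zero b
  have hsec : (u : K) * algebraMap Rp K (b : Rp) = algebraMap Rp K a :=
    IsLocalization.sec_spec (nonZeroDivisors Rp) (u : K)
  refine ⟨a, b, ?_, hbz, hsec.symm⟩
  intro hc
  rw [hc, map_zero] at hsec
  rcases mul_eq_zero.mp hsec with h1 | h1
  · exact Units.ne_zero u h1
  · exact algebraMap_ne_zero hbz h1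

lemma wdeg_one : wdeg (1 : K) = 0 := by
  have := wdeg_spec (1 : K) 1 1 one_ne_zero one_ne_zero (by rw [one_mul])
  rw [this, sub_self]

lemma wdeg_mul (z w : K) (hz : z ≠ 0) (hw : w ≠ 0) :
    wdeg (z * w) = wdeg z + wdeg w := by
  obtain ⟨f₁, g₁, hf₁, hg₁, h₁⟩ := exists_rep (Units.mk0 z hz)
  obtain ⟨f₂, g₂, hf₂, hg₂, h₂⟩ := exists_rep (Units.mk0 w hw)
  simp only [Units.val_mk0] at h₁ h₂
  have h3 : algebraMap Rp K (f₁ * f₂) = (z * w) * algebraMap Rp K (g₁ * g₂) := by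
    rw [map_mul, map_mul, h₁, h₂]; ring
  rw [wdeg_spec _ _ _ (mul_ne_zero hf₁ hf₂) (mul_ne_zero hg₁ hg₂) h3,
    wdeg_spec z _ _ hf₁ hg₁ h₁, wdeg_spec w _ _ hf₂ hg₂ h₂,
    vdeg_mul hf₁ hf₂, vdeg_mul hg₁ hg₂, m2_add, m2_add]
  abel

lemma wdeg_two_of_three (a b c : (K)ˣ) (h : (a : K) + (b : K) = (c : K)) :
    wdeg (a : K) = wdeg (b : K) ∨ wdeg (c : K) = wdeg (a : K) ∨
      wdeg (c : K) = wdeg (b : K) := by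
  obtain ⟨f₁, g₁, hf₁, hg₁, h₁⟩ := exists_rep a
  obtain ⟨f₂, g₂, hf₂, hg₂, h₂⟩ := exists_rep b
  obtain ⟨f₃, g₃, hf₃, hg₃, h₃⟩ := exists_rep c
  set F : Rp := f₁ * (g₂ * g₃) with hF
  set G : Rp := f₂ * (g₁ * g₃) with hG
  set H : Rp := f₃ * (g₁ * g₂) with hH
  set D : Rp := g₁ * (g₂ * g₃) with hD
  have hFne : F ≠ 0 := mul_ne_zero hf₁ (mul_ne_zero hg₂ hg₃)
  have hGne : G ≠ 0 := mul_ne_zero hf₂ (mul_ne_zero hg₁ hg₃)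
  have hHne : H ≠ 0 := mul_ne_zero hf₃ (mul_ne_zero hg₁ hg₂)
  have hDne : D ≠ 0 := mul_ne_zero hg₁ (mul_ne_zero hg₂ hg₃)
  have hrF : algebraMap Rp K F = (a : K) * algebraMap Rp K D := by
    rw [hF, hD, map_mul, map_mul, map_mul, map_mul, h₁]; ring
  have hrG : algebraMap Rp K G = (b : K) * algebraMap Rp K D := by
    rw [hG, hD, map_mul, map_mul, map_mul, map_mul, h₂]; ring
  have hrH : algebraMap Rp K H = (c : K) * algebraMap Rp K D := by
    rw [hH, hD, map_mul, map_mul, map_mul, map_mul, h₃]; ring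
  have hsum : F + G = H := by
    apply IsFractionRing.injective Rp K
    rw [RingHom.map_add, hrF, hrG, hrH, ← h]; ring
  have hwa := wdeg_spec (a : K) F D hFne hDne hrF
  have hwb := wdeg_spec (b : K) G D hGne hDne hrG
  have hwc := wdeg_spec (c : K) H D hHne hDne hrH
  by_cases hFG : vdeg F = vdeg G
  · left; rw [hwa, hwb, hFG]
  · rcases vdeg_add_cases hFG with h5 | h5
    · right; left; rw [hwa, hwc, ← hsum, h5]
    · right; right; rw [hwb, hwc, ← hsum, h5]

lemma wdeg_X (i : Fin n)
    (hx : algebraMap Rp K (MvPolynomial.X i) ≠ 0) :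
    wdeg (algebraMap Rp K (MvPolynomial.X i)) = fun j => if i = j then 1 else 0 := by
  have := wdeg_spec (algebraMap Rp K (MvPolynomial.X i)) (MvPolynomial.X i) 1
    (MvPolynomial.X_ne_zero i) one_ne_zero (by rw [map_one, mul_one])
  rw [this, vdeg_X, vdeg_one, m2_zero, sub_zero]
  funext j
  rw [m2]
  rw [show ofLex (toLex (Finsupp.single i 1)) = Finsupp.single i 1 from rfl,
    Finsupp.single_apply]
  by_cases h : i = j
  · rw [if_pos h, if_pos h]; rfl
  · rw [if_neg h, if_neg h]; rfl

lemma wdeg_neg_one : wdeg (-1 : K) = 0 := by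
  have h1 : algebraMap Rp K (MvPolynomial.C (-1 : k)) = (-1 : K) * algebraMap Rp K 1 := by
    rw [map_one, mul_one, MvPolynomial.C_neg, map_neg, MvPolynomial.C_1, map_one]
  have := wdeg_spec (-1 : K) (MvPolynomial.C (-1 : k)) 1
    (by rw [MvPolynomial.C_neg, MvPolynomial.C_1]; exact neg_ne_zero.mpr one_ne_zero)
    one_ne_zero h1
  rw [this, vdeg_C (neg_ne_zero.mpr one_ne_zero), vdeg_one, sub_self]

end Wdeg

end PfAux


section WittSide

variable (F : Type*) [Field F]

lemma wcls_one : wcls F 1 = 1 := by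
  rw [wcls, genElt, map_one, map_one]

lemma wcls_mul (a b : Fˣ) : wcls F a * wcls F b = wcls F (a * b) := by
  rw [wcls, wcls, wcls, genElt, genElt, genElt, ← map_mul, ← map_mul]

lemma wcls_hyp : wcls F 1 + wcls F (-1) = 0 := by
  have hmem : genElt F 1 + genElt F (-1) ∈ wittRel F :=
    Ideal.subset_span (Set.mem_insert _ _)
  have := Ideal.Quotient.eq_zero_iff_mem.mpr hmem
  rw [map_add] at this
  exact this

lemma wcls_sq (u : Fˣ) : wcls F (u ^ 2) = wcls F 1 := by
  have hmem : genElt F (u ^ 2) - genElt F 1 ∈ wittRel F :=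
    Ideal.subset_span (Set.mem_insert_iff.mpr (Or.inr (Set.mem_union_left _ ⟨u, rfl⟩)))
  have := Ideal.Quotient.eq_zero_iff_mem.mpr hmem
  rw [map_sub] at this
  exact sub_eq_zero.mp this

lemma wcls_chain (a b c : Fˣ) (h : (a : F) + (b : F) = (c : F)) :
    wcls F a + wcls F b - wcls F c - wcls F (a * b * c) = 0 := by
  have hmem : genElt F a + genElt F b - genElt F c - genElt F (a * b * c) ∈ wittRel F :=
    Ideal.subset_span (Set.mem_insert_iff.mpr (Or.inr (Set.mem_union_right _
      ⟨a, b, c, h, rfl⟩)))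
  have := Ideal.Quotient.eq_zero_iff_mem.mpr hmem
  rw [map_sub, map_sub, map_add] at this
  exact this

lemma witt_two_eq_zero (hsq : HasSqrtNegOne F) : (1 : WittRing F) + 1 = 0 := by
  obtain ⟨i, hi⟩ := hsq
  have hi0 : i ≠ 0 := by
    intro h
    rw [h, mul_zero] at hi
    exact one_ne_zero (neg_eq_zero.mp hi.symm)
  set I : Fˣ := Units.mk0 i hi0 with hI
  have hIsq : I ^ 2 = (-1 : Fˣ) := by
    apply Units.ext
    rw [Units.val_pow_eq_pow_val, sq, Units.val_neg, Units.val_one, hI, Units.val_mk0, hi]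
  have h1 : wcls F (-1) = wcls F 1 := by rw [← hIsq, wcls_sq]
  have := wcls_hyp F
  rw [h1, wcls_one F] at this
  exact this

lemma witt_add_self (hsq : HasSqrtNegOne F) (z : WittRing F) : z + z = 0 := by
  have h := witt_two_eq_zero F hsq
  linear_combination z * h

lemma witt_even_nsmul (hsq : HasSqrtNegOne F) (m : ℕ) (hm : Even m) (z : WittRing F) :
    m • z = 0 := by
  obtain ⟨t, rfl⟩ := hm
  rw [add_nsmul]
  exact witt_add_self F hsq _

lemma y_mul (hsq : HasSqrtNegOne F) (a b : Fˣ) :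
    1 + wcls F (a * b) = ((1 + wcls F a) + (1 + wcls F b)) +
      (1 + wcls F a) * (1 + wcls F b) := by
  have h2 := witt_add_self F hsq
  linear_combination (-1 : WittRing F) * h2 1 - h2 (wcls F a) - h2 (wcls F b)
    - wcls_mul F a b

lemma tele (hsq : HasSqrtNegOne F) :
    ∀ (m : ℕ) (a : Fin (m + 1) → Fˣ),
    ∃ f : Fin m → WittRing F,
      (∀ j, ∃ c d : Fˣ, f j = (1 + wcls F c) * (1 + wcls F d)) ∧
      (1 + wcls F (∏ i, a i)) + ∑ i, (1 + wcls F (a i)) = ∑ j, f j := by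
  intro m
  induction m with
  | zero =>
    intro a
    refine ⟨fun j => j.elim0, fun j => j.elim0, ?_⟩
    rw [Fin.prod_univ_one, Fin.sum_univ_one, Finset.univ_eq_empty, Finset.sum_empty]
    exact witt_add_self F hsq _
  | succ m IH =>
    intro a
    obtain ⟨f, hf, hsum⟩ := IH (fun i => a i.castSucc)
    set Pf : WittRing F := (1 + wcls F (∏ i : Fin (m+1), a i.castSucc)) *
      (1 + wcls F (a (Fin.last (m+1)))) with hPf
    refine ⟨Fin.snoc f Pf, ?_, ?_⟩
    · intro j
      induction j using Fin.lastCases with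
      | last =>
        rw [Fin.snoc_last]
        exact ⟨_, _, hPf⟩
      | cast i =>
        rw [Fin.snoc_castSucc]
        exact hf i
    · rw [Fin.sum_univ_castSucc (f := fun i : Fin (m+1+1) => (1 + wcls F (a i))),
        Fin.sum_univ_castSucc (f := Fin.snoc f Pf),
        Fin.prod_univ_castSucc (f := a), y_mul F hsq]
      have hsnoc : ∀ i : Fin m, (Fin.snoc f Pf : Fin (m+1) → WittRing F) i.castSucc = f i :=
        fun i => Fin.snoc_castSucc _ _ _
      rw [Finset.sum_congr rfl (fun i _ => hsnoc i), Fin.snoc_last]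
      linear_combination hsum + witt_add_self F hsq (1 + wcls F (a (Fin.last (m+1))))

end WittSide


section Phi

open PfAux

variable {n : ℕ} {k : Type*} [Field k]

local notation "Rp" => MvPolynomial (Fin n) k
local notation "K" => FractionRing (MvPolynomial (Fin n) k)

noncomputable def phiu : (K)ˣ →* Multiplicative (Gr (Fin n)) where
  toFun u := Multiplicative.ofAdd (wdeg (u : K))
  map_one' := by
    show Multiplicative.ofAdd (wdeg ((1 : (K)ˣ) : K)) = 1
    rw [Units.val_one, wdeg_one, ofAdd_zero]
  map_mul' u v := by
    show Multiplicative.ofAdd (wdeg ((u * v : (K)ˣ) : K))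
      = Multiplicative.ofAdd (wdeg ((u : K))) * Multiplicative.ofAdd (wdeg ((v : K)))
    rw [Units.val_mul, wdeg_mul _ _ (Units.ne_zero u) (Units.ne_zero v), ofAdd_add]

noncomputable def psiK : (K)ˣ →* Alg (Fin n) :=
  (MonoidAlgebra.of (ZMod 2) (Multiplicative (Gr (Fin n)))).comp phiu

lemma psiK_apply (u : (K)ˣ) : psiK u = sg (wdeg (u : K)) := rfl

noncomputable def PhiA : MonoidAlgebra ℤ (K)ˣ →ₐ[ℤ] Alg (Fin n) :=
  MonoidAlgebra.lift ℤ (Alg (Fin n)) (K)ˣ psiK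

lemma PhiA_gen (a : (K)ˣ) : PhiA (genElt K a) = sg (wdeg (a : K)) := by
  rw [genElt, show (PhiA (MonoidAlgebra.of ℤ (K)ˣ a) : Alg (Fin n))
    = psiK a from MonoidAlgebra.lift_of _ _, psiK_apply]

lemma gr_add_self (γ : Gr (Fin n)) : γ + γ = 0 := funext fun _ => two_zmod2 _

lemma wdeg_sq_unit (u : (K)ˣ) : wdeg ((u ^ 2 : (K)ˣ) : K) = 0 := by
  rw [Units.val_pow_eq_pow_val, sq, wdeg_mul _ _ (Units.ne_zero u) (Units.ne_zero u)]
  exact gr_add_self _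

lemma wdeg_mul_units (a b : (K)ˣ) :
    wdeg ((a * b : (K)ˣ) : K) = wdeg (a : K) + wdeg (b : K) := by
  rw [Units.val_mul, wdeg_mul _ _ (Units.ne_zero a) (Units.ne_zero b)]

lemma phi_ker : wittRel K ≤ RingHom.ker (PhiA (n := n) (k := k)).toRingHom := by
  rw [wittRel, Ideal.span_le]
  intro g hg
  rw [SetLike.mem_coe, RingHom.mem_ker]
  rcases Set.mem_insert_iff.mp hg with rfl | hg'
  · rw [map_add, AlgHom.toRingHom_eq_coe, RingHom.coe_coe, PhiA_gen, PhiA_gen,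
      Units.val_one, wdeg_one, Units.val_neg, Units.val_one, wdeg_neg_one,
      sg_zero, one_add_one_alg]
  rcases hg' with ⟨u, rfl⟩ | ⟨a, b, c, habc, rfl⟩
  · rw [map_sub, AlgHom.toRingHom_eq_coe, RingHom.coe_coe, PhiA_gen, PhiA_gen,
      Units.val_one, wdeg_one, wdeg_sq_unit, sub_self]
  · rw [map_sub, map_sub, map_add, AlgHom.toRingHom_eq_coe, RingHom.coe_coe,
      PhiA_gen, PhiA_gen, PhiA_gen, PhiA_gen]
    have habc2 : wdeg ((a * b * c : (K)ˣ) : K)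
        = wdeg (a : K) + wdeg (b : K) + wdeg (c : K) := by
      rw [wdeg_mul_units, wdeg_mul_units]
    rcases wdeg_two_of_three a b c habc with h | h | h
    · have h3 : wdeg ((a * b * c : (K)ˣ) : K) = wdeg (c : K) := by
        linear_combination habc2 + h + gr_add_self (wdeg ((b : K)))
      rw [h3, h]
      linear_combination sg_add_self (wdeg ((b : K))) - sg_add_self (wdeg ((c : K)))
    · have h3 : wdeg ((a * b * c : (K)ˣ) : K) = wdeg (b : K) := by
        linear_combination habc2 + gr_add_self (wdeg ((a : K))) + h
      rw [h3, h]
      ring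
    · have h3 : wdeg ((a * b * c : (K)ˣ) : K) = wdeg (a : K) := by
        linear_combination habc2 + gr_add_self (wdeg ((b : K))) + h
      rw [h3, h]
      ring

noncomputable def Phibar : WittRing K →+* Alg (Fin n) :=
  Ideal.Quotient.lift (wittRel K) (PhiA (n := n) (k := k)).toRingHom
    (fun a ha => RingHom.mem_ker.mp (phi_ker ha))

lemma Phibar_wcls (a : (K)ˣ) : Phibar (wcls K a) = sg (wdeg (a : K)) := by
  rw [wcls, Phibar, Ideal.Quotient.lift_mk, AlgHom.toRingHom_eq_coe, RingHom.coe_coe,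
    PhiA_gen]

lemma wdeg_prod {ι : Type*} (s : Finset ι) (g : ι → K) (hg : ∀ i, g i ≠ 0) :
    wdeg (∏ i ∈ s, g i) = ∑ i ∈ s, wdeg (g i) := by
  classical
  induction s using Finset.cons_induction with
  | empty => rw [Finset.prod_empty, Finset.sum_empty, wdeg_one]
  | cons a s ha IH =>
    rw [Finset.prod_cons, Finset.sum_cons,
      wdeg_mul _ _ (hg a) (Finset.prod_ne_zero_iff.mpr (fun i _ => hg i)), IH]

lemma wdeg_X_single (i : Fin n) :
    wdeg (algebraMap Rp K (MvPolynomial.X i)) = Pi.single i 1 := by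
  rw [wdeg_X i (algebraMap_ne_zero (MvPolynomial.X_ne_zero i))]
  funext j
  rw [Pi.single_apply]
  by_cases h : i = j
  · rw [if_pos h, if_pos h.symm]
  · rw [if_neg h, if_neg (fun hh => h hh.symm)]

end Phi


section Phi2

open PfAux

variable {n : ℕ} {k : Type*} [Field k]

local notation "Rp" => MvPolynomial (Fin n) k
local notation "K" => FractionRing (MvPolynomial (Fin n) k)

set_option synthInstance.maxHeartbeats 1000000
set_option maxHeartbeats 2000000

lemma wdeg_one_unit : wdeg ((1 : (K)ˣ) : K) = 0 := by
  rw [Units.val_one, wdeg_one]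

lemma Phibar_qgen (x : Fin n → (K)ˣ)
    (hx : ∀ i, (x i : K) = algebraMap Rp K (MvPolynomial.X i)) :
    Phibar (wcls K 1 + (wcls K (∏ i, x i) + ∑ i, wcls K (x i))) = Xel (Fin n) := by
  rw [map_add, map_add, map_sum Phibar (fun i => wcls K (x i)) Finset.univ,
    Phibar_wcls, Phibar_wcls, wdeg_one_unit, sg_zero]
  have hxi : ∀ i, wdeg ((x i : K)) = Pi.single i 1 := fun i => by
    rw [hx i, wdeg_X_single]
  have hx0 : wdeg ((↑(∏ i, x i)) : K) = (fun _ => 1) := by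
    rw [show ((↑(∏ i, x i)) : K) = ∏ i, ((x i : K)) from
      map_prod (Units.coeHom _) x Finset.univ]
    rw [wdeg_prod _ _ (fun i => Units.ne_zero (x i))]
    funext j
    rw [Finset.sum_apply]
    rw [Finset.sum_congr rfl (fun i _ => by rw [hxi i])]
    rw [Finset.sum_pi_single]
    simp
  rw [hx0, Xel]
  have hterm : ∀ i : Fin n, Phibar (wcls K (x i)) = sg (Pi.single i 1) := fun i => by
    rw [Phibar_wcls, hxi i]
  rw [Finset.sum_congr rfl (fun i _ => hterm i)]
  ring

lemma pf2_lower (x : Fin n → (K)ˣ)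
    (hx : ∀ i, (x i : K) = algebraMap Rp K (MvPolynomial.X i))
    (hev : Even n) (r : ℕ)
    (hPf : Pf2In K (wcls K 1 + (wcls K (∏ i, x i) + ∑ i, wcls K (x i))) r) :
    n ≤ r + 1 := by
  obtain ⟨g, hg, hgs⟩ := hPf
  choose a b hab using hg
  have hX2 : Xel (Fin n) = ∑ j : Fin r,
      (1 + sg (wdeg ((a j : K)))) * (1 + sg (wdeg ((b j : K)))) := by
    rw [← Phibar_qgen x hx, hgs, map_sum Phibar g Finset.univ]
    refine Finset.sum_congr rfl (fun j _ => ?_)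
    rw [hab j, map_mul, map_add, map_add, Phibar_wcls, Phibar_wcls, Phibar_wcls,
      wdeg_one_unit, sg_zero]
  have hcomb := main_comb (Fin n) (by rw [Fintype.card_fin]; exact hev) r _ _ hX2
  rwa [Fintype.card_fin] at hcomb

end Phi2

/-- For n ≥ 2 even, K = k(x₁,…,x_n), x₀ = x₁⋯x_n, the generic form
q₀' = ⟨1, x₀, x₁, …, x_n⟩ lies in I²(K) and Pf₂(q₀') = n − 1. -/
theorem pf2_generic_even (k : Type*) [Field k] (hchar : ringChar k ≠ 2)
    (hsq : HasSqrtNegOne k) (n : ℕ) (hn : 2 ≤ n) (hev : Even n)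
    (x : Fin n → (FractionRing (MvPolynomial (Fin n) k))ˣ)
    (hx : ∀ i, (x i : FractionRing (MvPolynomial (Fin n) k)) =
      algebraMap (MvPolynomial (Fin n) k) (FractionRing (MvPolynomial (Fin n) k))
        (MvPolynomial.X i)) :
    wclassOf (FractionRing (MvPolynomial (Fin n) k))
        (Fin.cons 1 (Fin.cons (∏ i, x i) x)) ∈
      (fundIdeal (FractionRing (MvPolynomial (Fin n) k))) ^ 2 ∧
    Pf2Num (FractionRing (MvPolynomial (Fin n) k))
      (wclassOf (FractionRing (MvPolynomial (Fin n) k))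
        (Fin.cons 1 (Fin.cons (∏ i, x i) x))) = n - 1 := by
  classical
  obtain ⟨n', rfl⟩ : ∃ n', n = n' + 1 := ⟨n - 1, by omega⟩
  have hsqK : HasSqrtNegOne (FractionRing (MvPolynomial (Fin (n' + 1)) k)) := by
    obtain ⟨i, hi⟩ := hsq
    refine ⟨algebraMap (MvPolynomial (Fin (n' + 1)) k) _ (MvPolynomial.C i), ?_⟩
    rw [← map_mul, ← map_mul, hi, map_neg, map_neg, map_one, map_one]
  have h2 := witt_add_self (FractionRing (MvPolynomial (Fin (n' + 1)) k)) hsqK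
  have hq'sum : wclassOf (FractionRing (MvPolynomial (Fin (n' + 1)) k))
      (Fin.cons 1 (Fin.cons (∏ i, x i) x))
      = wcls _ 1 + (wcls _ (∏ i, x i) + ∑ i, wcls _ (x i)) := by
    rw [wclassOf, Fin.sum_univ_succ, Fin.sum_univ_succ]
    simp only [Fin.cons_zero, Fin.cons_succ]
  obtain ⟨f, hf, hts⟩ := tele (FractionRing (MvPolynomial (Fin (n' + 1)) k)) hsqK n' x
  have hones : ∑ _i : Fin (n' + 1),
      (1 : WittRing (FractionRing (MvPolynomial (Fin (n' + 1)) k))) = 0 := by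
    rw [Finset.sum_const, Finset.card_univ, Fintype.card_fin]
    exact witt_even_nsmul _ hsqK _ hev _
  have hq' : wclassOf (FractionRing (MvPolynomial (Fin (n' + 1)) k))
      (Fin.cons 1 (Fin.cons (∏ i, x i) x)) = ∑ j, f j := by
    rw [hq'sum, ← hts, wcls_one]
    have hd : ∑ i, (1 + wcls (FractionRing (MvPolynomial (Fin (n' + 1)) k)) (x i))
        = (∑ _i : Fin (n' + 1),
            (1 : WittRing (FractionRing (MvPolynomial (Fin (n' + 1)) k))))
          + ∑ i, wcls _ (x i) := Finset.sum_add_distrib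
    rw [hd, hones, zero_add]
    ring
  constructor
  · rw [hq', Submodule.pow_succ, Submodule.pow_one]
    refine Submodule.sum_mem _ (fun j _ => ?_)
    obtain ⟨c, d, hcd⟩ := hf j
    rw [hcd]
    refine Ideal.mul_mem_mul ?_ ?_
    · exact Ideal.subset_span ⟨1, c, by rw [wcls_one]⟩
    · exact Ideal.subset_span ⟨1, d, by rw [wcls_one]⟩
  · have hmem : Pf2In (FractionRing (MvPolynomial (Fin (n' + 1)) k))
        (wclassOf (FractionRing (MvPolynomial (Fin (n' + 1)) k))
          (Fin.cons 1 (Fin.cons (∏ i, x i) x))) n' := by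
      refine ⟨f, fun j => ?_, hq'⟩
      obtain ⟨c, d, hcd⟩ := hf j
      exact ⟨c, d, by rw [hcd, wcls_one]⟩
    have hlow : ∀ r, Pf2In (FractionRing (MvPolynomial (Fin (n' + 1)) k))
        (wclassOf (FractionRing (MvPolynomial (Fin (n' + 1)) k))
          (Fin.cons 1 (Fin.cons (∏ i, x i) x))) r → n' ≤ r := by
      intro r hPf
      rw [hq'sum] at hPf
      have := pf2_lower x hx hev r hPf
      omega
    rw [Pf2Num, show n' + 1 - 1 = n' from rfl]
    exact le_antisymm (Nat.sInf_le hmem) (le_csInf ⟨n', hmem⟩ (fun r hr => hlow r hr))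
end
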